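/- arXiv:2112.07137 — 2 statements merged into one kernel-verified Lean document; each statement's English description precedes it below -/
import Mathlib

section
/- Let n be a positive integer, let g₁, g₂, v ∈ F₂[x] have degree less than n with g₁·h₁ = xⁿ−1 and g₂·h₂ = xⁿ−1 for some h₁, h₂ ∈ F₂[x], gcd(g₁, g₂) = 1, gcd(v−1, xⁿ−1) = 1, g₂ | x^{deg h₁}·h₁(1/x), and v̄ = v (where v̄ denotes the polynomial v₀ + v_{n−1}x + v_{n−2}x² + ⋯ + v₁x^{n−1}). Then the two-generator quasi-cyclic code C(g₁,g₂,v) ⊆ F₂^{2n} satisfies C(g₁,g₂,v)^⊥ₛ ⊆ C(g₁,g₂,v) and has F₂-dimension 2n − deg(g₁) − deg(g₂); in particular its dimension is at least n. -/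
open Polynomial

/-- The coefficient-vector map `[g] = (g₀, …, g_{n−1}) ∈ F₂ⁿ` (as a linear map). -/
noncomputable def vecL (n : ℕ) : Polynomial (ZMod 2) →ₗ[ZMod 2] (Fin n → ZMod 2) :=
  LinearMap.pi fun i => Polynomial.lcoeff (ZMod 2) (i : ℕ)

/-- The linear map `(a, b) ↦ ([a·v·g₁ + b·g₂ mod xⁿ−1], [a·g₁ + b·v·g₂ mod xⁿ−1])`. -/
noncomputable def cwL (n : ℕ) (g₁ g₂ v : Polynomial (ZMod 2)) :
    (Polynomial (ZMod 2) × Polynomial (ZMod 2)) →ₗ[ZMod 2]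
      ((Fin n → ZMod 2) × (Fin n → ZMod 2)) :=
  LinearMap.prod
    ((vecL n).comp ((Polynomial.modByMonicHom (X ^ n - 1)).comp
      ((LinearMap.mulRight (ZMod 2) (v * g₁)).comp (LinearMap.fst (ZMod 2) _ _) +
       (LinearMap.mulRight (ZMod 2) g₂).comp (LinearMap.snd (ZMod 2) _ _))))
    ((vecL n).comp ((Polynomial.modByMonicHom (X ^ n - 1)).comp
      ((LinearMap.mulRight (ZMod 2) g₁).comp (LinearMap.fst (ZMod 2) _ _) +
       (LinearMap.mulRight (ZMod 2) (v * g₂)).comp (LinearMap.snd (ZMod 2) _ _))))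

/-- The two-generator quasi-cyclic code
`C(g₁,g₂,v) = { ([a·v·g₁ + b·g₂ mod xⁿ−1], [a·g₁ + b·v·g₂ mod xⁿ−1]) : a, b ∈ F₂[x] } ⊆ F₂^{2n}`,
where `F₂^{2n}` is identified with `F₂ⁿ × F₂ⁿ`. -/
noncomputable def QCCode (n : ℕ) (g₁ g₂ v : Polynomial (ZMod 2)) :
    Submodule (ZMod 2) ((Fin n → ZMod 2) × (Fin n → ZMod 2)) :=
  LinearMap.range (cwL n g₁ g₂ v)

/-- Euclidean inner product on `F₂ⁿ`. -/
def einner (n : ℕ) (u w : Fin n → ZMod 2) : ZMod 2 := ∑ i, u i * w i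

/-- Symplectic inner product `⟨u,w⟩ₛ = Σᵢ (uᵢ w_{n+i} − u_{n+i} wᵢ)` on `F₂ⁿ × F₂ⁿ ≅ F₂^{2n}`. -/
def sinner (n : ℕ) (u w : (Fin n → ZMod 2) × (Fin n → ZMod 2)) : ZMod 2 :=
  ∑ i, (u.1 i * w.2 i - u.2 i * w.1 i)

/-- Symplectic dual `C^⊥ₛ = {w : ⟨u,w⟩ₛ = 0 for all u ∈ C}` of a linear code `C ⊆ F₂^{2n}`. -/
noncomputable def sympDual (n : ℕ)
    (C : Submodule (ZMod 2) ((Fin n → ZMod 2) × (Fin n → ZMod 2))) :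
    Submodule (ZMod 2) ((Fin n → ZMod 2) × (Fin n → ZMod 2)) where
  carrier := {w | ∀ u ∈ C, sinner n u w = 0}
  zero_mem' := by intro u _; simp [sinner]
  add_mem' := by
    intro w w' hw hw' u hu
    have h : sinner n u (w + w') = sinner n u w + sinner n u w' := by
      simp only [sinner, Prod.fst_add, Prod.snd_add, Pi.add_apply]
      rw [← Finset.sum_add_distrib]
      exact Finset.sum_congr rfl fun i _ => by ring
    rw [h, hw u hu, hw' u hu, add_zero]
  smul_mem' := by
    intro c w hw u hu
    have h : sinner n u (c • w) = c * sinner n u w := by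
      simp only [sinner, Prod.smul_fst, Prod.smul_snd, Pi.smul_apply, smul_eq_mul,
        Finset.mul_sum]
      exact Finset.sum_congr rfl fun i _ => by ring
    rw [h, hw u hu, mul_zero]

/-- Symplectic weight `wₛ(u) = #{i : (uᵢ, u_{n+i}) ≠ (0,0)}` on `F₂ⁿ × F₂ⁿ ≅ F₂^{2n}`. -/
def sympWt (n : ℕ) (u : (Fin n → ZMod 2) × (Fin n → ZMod 2)) : ℕ :=
  (Finset.univ.filter fun i : Fin n => (u.1 i, u.2 i) ≠ ((0 : ZMod 2), (0 : ZMod 2))).card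

/-- For `f` of degree `< n`, the polynomial `f̄ = f₀ + f_{n−1}x + f_{n−2}x² + ⋯ + f₁x^{n−1}`. -/
noncomputable def barPoly (n : ℕ) (f : Polynomial (ZMod 2)) : Polynomial (ZMod 2) :=
  ∑ i ∈ Finset.range n, Polynomial.C (f.coeff (if i = 0 then 0 else n - i)) * Polynomial.X ^ i

/-- The linear map `(c, d) ↦ ([c·G₁ + d·V·G₂ mod xⁿ−1], [c·V·G₁ + d·G₂ mod xⁿ−1])`;
with `G₁ = g₁^⊥`, `G₂ = g₂^⊥` and `V = v̄` its range is the claimed symplectic dual code. -/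
noncomputable def dualCwL (n : ℕ) (G₁ G₂ V : Polynomial (ZMod 2)) :
    (Polynomial (ZMod 2) × Polynomial (ZMod 2)) →ₗ[ZMod 2]
      ((Fin n → ZMod 2) × (Fin n → ZMod 2)) :=
  LinearMap.prod
    ((vecL n).comp ((Polynomial.modByMonicHom (X ^ n - 1)).comp
      ((LinearMap.mulRight (ZMod 2) G₁).comp (LinearMap.fst (ZMod 2) _ _) +
       (LinearMap.mulRight (ZMod 2) (V * G₂)).comp (LinearMap.snd (ZMod 2) _ _))))
    ((vecL n).comp ((Polynomial.modByMonicHom (X ^ n - 1)).comp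
      ((LinearMap.mulRight (ZMod 2) (V * G₁)).comp (LinearMap.fst (ZMod 2) _ _) +
       (LinearMap.mulRight (ZMod 2) G₂).comp (LinearMap.snd (ZMod 2) _ _))))

section QCAux

open Finset

noncomputable abbrev Mn (n : ℕ) : Polynomial (ZMod 2) := X ^ n - 1

variable {n : ℕ}

private lemma monic_Mn (hn : 0 < n) : (Mn n).Monic := by
  simpa using monic_X_pow_sub_C (1 : ZMod 2) hn.ne'

private lemma natDegree_Mn : (Mn n).natDegree = n := by
  simpa using natDegree_X_pow_sub_C (n := n) (r := (1 : ZMod 2))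

private lemma degree_Mn (hn : 0 < n) : (Mn n).degree = n := by
  simpa using degree_X_pow_sub_C hn (1 : ZMod 2)

private lemma Mn_ne_zero (hn : 0 < n) : Mn n ≠ 0 := (monic_Mn hn).ne_zero

private lemma exp_dvd_aux (hn : 0 < n) {a b : ℕ} (hab : b ≤ a) (h : a % n = b % n) :
    Mn n ∣ (X : Polynomial (ZMod 2)) ^ a - X ^ b := by
  obtain ⟨k, hk⟩ := (Nat.modEq_iff_dvd' hab).1 (show Nat.ModEq n b a from h.symm)
  have ha : a = b + n * k := by omega
  subst ha
  have key : (X : Polynomial (ZMod 2)) ^ (b + n * k) - X ^ b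
      = ((X ^ n) ^ k - 1 ^ k) * X ^ b := by
    rw [pow_add, pow_mul]; ring
  rw [key]
  exact (sub_dvd_pow_sub_pow (X ^ n) 1 k).mul_right _

private lemma exp_dvd (hn : 0 < n) {a b : ℕ} (h : a % n = b % n) :
    Mn n ∣ (X : Polynomial (ZMod 2)) ^ a - X ^ b := by
  rcases le_total b a with hab | hab
  · exact exp_dvd_aux hn hab h
  · exact dvd_sub_comm.1 (exp_dvd_aux hn hab h.symm)

private lemma mod_congr (hn : 0 < n) {p q : Polynomial (ZMod 2)} (h : Mn n ∣ p - q) :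
    p %ₘ Mn n = q %ₘ Mn n := by
  have h0 : (p - q) %ₘ Mn n = 0 := (modByMonic_eq_zero_iff_dvd (monic_Mn hn)).2 h
  have h2 := map_sub (modByMonicHom (Mn n)) p q
  simp only [modByMonicHom_apply] at h2
  exact sub_eq_zero.1 (h2 ▸ h0)

private lemma dvd_mod_sub (hn : 0 < n) (p : Polynomial (ZMod 2)) :
    Mn n ∣ p - p %ₘ Mn n :=
  ⟨p /ₘ Mn n, by linear_combination - modByMonic_add_div p (Mn n)⟩

private lemma mod_eq_self (hn : 0 < n) {p : Polynomial (ZMod 2)} (hp : p.natDegree < n) :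
    p %ₘ Mn n = p := by
  rcases eq_or_ne p 0 with rfl | h0
  · simp
  · exact (modByMonic_eq_self_iff (monic_Mn hn)).2
      (by rw [degree_Mn hn]; exact (natDegree_lt_iff_degree_lt h0).1 hp)

private lemma natDegree_mod_lt (hn : 0 < n) (p : Polynomial (ZMod 2)) :
    (p %ₘ Mn n).natDegree < n := by
  rcases eq_or_ne (p %ₘ Mn n) 0 with h | h
  · simpa [h]
  · have h2 := degree_modByMonic_lt p (monic_Mn hn)
    rw [degree_Mn hn] at h2
    exact (natDegree_lt_iff_degree_lt h).2 h2

private lemma X_pow_mod (hn : 0 < n) (a : ℕ) :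
    (X : Polynomial (ZMod 2)) ^ a %ₘ Mn n = X ^ (a % n) := by
  have h1 : (X : Polynomial (ZMod 2)) ^ a %ₘ Mn n = X ^ (a % n) %ₘ Mn n :=
    mod_congr hn (exp_dvd hn (Nat.mod_mod_of_dvd a dvd_rfl).symm)
  rw [h1, mod_eq_self hn (by rw [natDegree_X_pow]; exact Nat.mod_lt _ hn)]

/-- `ell n p` is the constant coefficient of `p mod X^n-1`, as a linear map. -/
private noncomputable def ell (n : ℕ) : Polynomial (ZMod 2) →ₗ[ZMod 2] ZMod 2 :=
  (lcoeff (ZMod 2) 0).comp (modByMonicHom (Mn n))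

private lemma ell_apply (p : Polynomial (ZMod 2)) : ell n p = (p %ₘ Mn n).coeff 0 := rfl

private lemma ell_congr (hn : 0 < n) {p q : Polynomial (ZMod 2)} (h : Mn n ∣ p - q) :
    ell n p = ell n q := by
  rw [ell_apply, ell_apply, mod_congr hn h]

private lemma ell_monomial (hn : 0 < n) (a : ZMod 2) (m : ℕ) :
    ell n (C a * X ^ m) = a * (if m % n = 0 then 1 else 0) := by
  rw [ell_apply, ← smul_eq_C_mul, smul_modByMonic, X_pow_mod hn, coeff_smul,
    coeff_X_pow, smul_eq_mul]
  congr 1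
  exact if_congr eq_comm rfl rfl

private lemma mod_zero_cases {m : ℕ} (hn : 0 < n) (hm : m < 2 * n) (h : m % n = 0) :
    m = 0 ∨ m = n := by
  obtain ⟨t, rfl⟩ := Nat.dvd_of_mod_eq_zero h
  match t with
  | 0 => left; simp
  | 1 => right; simp
  | (t + 2) =>
    exfalso
    have h2 : n * 2 ≤ n * (t + 2) := Nat.mul_le_mul_left n (by omega)
    omega

private lemma sum_delta (hn : 0 < n) {k : ℕ} (hk : k < n) (a : ℕ → ZMod 2) :
    (∑ i ∈ range n, a i * (if (k + i) % n = 0 then 1 else 0))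
      = a (if k = 0 then 0 else n - k) := by
  have hi0n : (if k = 0 then 0 else n - k) < n := by split_ifs <;> omega
  have hcond : (k + (if k = 0 then 0 else n - k)) % n = 0 := by
    split_ifs with h0
    · simp [h0]
    · rw [show k + (n - k) = n from by omega, Nat.mod_self]
  rw [Finset.sum_eq_single (if k = 0 then 0 else n - k)]
  · rw [if_pos hcond, mul_one]
  · intro i hi hne
    rw [if_neg, mul_zero]
    intro hmod
    have hin : i < n := mem_range.mp hi
    have hc := mod_zero_cases hn (by omega : k + i < 2 * n) hmod
    apply hne
    split_ifs with h0 <;> omega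
  · intro h; exact absurd (mem_range.mpr hi0n) h

private lemma sigma_lt (hn : 0 < n) {j : ℕ} (hj : j < n) :
    (if j = 0 then 0 else n - j) < n := by split_ifs <;> omega

private lemma sigma_sigma (hn : 0 < n) {j : ℕ} (hj : j < n) :
    (if (if j = 0 then 0 else n - j) = 0 then 0
      else n - (if j = 0 then 0 else n - j)) = j := by
  split_ifs <;> omega

/-- writing a polynomial of degree `< m` as a sum of `C _ * X ^ _`. -/
private lemma poly_as_sum {p : Polynomial (ZMod 2)} {m : ℕ} (hp : p.natDegree < m) :
    p = ∑ i ∈ range m, C (p.coeff i) * X ^ i := by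
  conv_lhs => rw [p.as_sum_range' m hp]
  exact Finset.sum_congr rfl fun i _ => (C_mul_X_pow_eq_monomial).symm

/-- the map sending a vector to the corresponding polynomial of degree `< m`. -/
private noncomputable def fromVec (m : ℕ) : (Fin m → ZMod 2) →ₗ[ZMod 2] Polynomial (ZMod 2) :=
  ∑ i : Fin m, (monomial (i : ℕ)).comp (LinearMap.proj i)

private lemma fromVec_apply (m : ℕ) (w : Fin m → ZMod 2) :
    fromVec m w = ∑ i : Fin m, monomial (i : ℕ) (w i) := by
  simp [fromVec, LinearMap.sum_apply]

private lemma coeff_fromVec {m : ℕ} (w : Fin m → ZMod 2) {k : ℕ} (hk : k < m) :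
    (fromVec m w).coeff k = w ⟨k, hk⟩ := by
  rw [fromVec_apply, finset_sum_coeff]
  rw [Finset.sum_eq_single (⟨k, hk⟩ : Fin m)]
  · simp [coeff_monomial]
  · intro i _ hne
    rw [coeff_monomial, if_neg]
    exact fun h => hne (Fin.ext h)
  · simp

private lemma coeff_fromVec_ge {m : ℕ} (w : Fin m → ZMod 2) {k : ℕ} (hk : m ≤ k) :
    (fromVec m w).coeff k = 0 := by
  rw [fromVec_apply, finset_sum_coeff]
  refine Finset.sum_eq_zero fun i _ => ?_
  rw [coeff_monomial, if_neg]
  omega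

private lemma natDegree_fromVec_lt {m : ℕ} (hm : 0 < m) (w : Fin m → ZMod 2) :
    (fromVec m w).natDegree < m := by
  have hdeg : (fromVec m w).degree < (m : ℕ) := by
    rw [fromVec_apply]
    refine lt_of_le_of_lt (degree_sum_le _ _) ?_
    rw [Finset.sup_lt_iff (by exact_mod_cast WithBot.bot_lt_coe (m : ℕ))]
    intro i _
    exact lt_of_le_of_lt (degree_monomial_le _ _) (by exact_mod_cast i.isLt)
  rcases eq_or_ne (fromVec m w) 0 with h | h
  · simpa [h] using hm
  · exact (natDegree_lt_iff_degree_lt h).2 hdeg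

private lemma vecL_apply' (p : Polynomial (ZMod 2)) (i : Fin n) :
    vecL n p i = p.coeff i := rfl

private lemma vecL_fromVec {m : ℕ} (w : Fin m → ZMod 2) : vecL m (fromVec m w) = w := by
  funext i
  rw [vecL_apply', coeff_fromVec w i.isLt]

private lemma fromVec_vecL {m : ℕ} {p : Polynomial (ZMod 2)} (hp : p.natDegree < m) :
    fromVec m (vecL m p) = p := by
  apply Polynomial.ext
  intro k
  rcases lt_or_ge k m with hk | hk
  · rw [coeff_fromVec _ hk]; rfl
  · rw [coeff_fromVec_ge _ hk, coeff_eq_zero_of_natDegree_lt (lt_of_lt_of_le hp hk)]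

private lemma vecL_mod_inj (hn : 0 < n) {p q : Polynomial (ZMod 2)}
    (h : vecL n (p %ₘ Mn n) = vecL n (q %ₘ Mn n)) : p %ₘ Mn n = q %ₘ Mn n := by
  apply Polynomial.ext
  intro k
  rcases lt_or_ge k n with hk | hk
  · exact congrFun h ⟨k, hk⟩
  · rw [coeff_eq_zero_of_natDegree_lt (lt_of_lt_of_le (natDegree_mod_lt hn p) hk),
        coeff_eq_zero_of_natDegree_lt (lt_of_lt_of_le (natDegree_mod_lt hn q) hk)]

private lemma vecL_mod_eq_zero (hn : 0 < n) {p : Polynomial (ZMod 2)} :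
    vecL n (p %ₘ Mn n) = 0 ↔ Mn n ∣ p := by
  constructor
  · intro h
    rw [← modByMonic_eq_zero_iff_dvd (monic_Mn hn)]
    have h0 : vecL n ((0 : Polynomial (ZMod 2)) %ₘ Mn n) = 0 := by simp
    have := vecL_mod_inj hn (h.trans h0.symm)
    simpa using this
  · intro h
    have : p %ₘ Mn n = 0 := (modByMonic_eq_zero_iff_dvd (monic_Mn hn)).2 h
    rw [this]; simp

private lemma cwL_apply (n : ℕ) (g₁ g₂ v a b : Polynomial (ZMod 2)) :
    cwL n g₁ g₂ v (a, b) =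
      (vecL n ((a * (v * g₁) + b * g₂) %ₘ Mn n),
       vecL n ((a * g₁ + b * (v * g₂)) %ₘ Mn n)) := rfl

end QCAux

section QCAux2

open Finset

variable {n : ℕ}

/-- the substitution `x ↦ x^(n-1)`, i.e. `x ↦ x⁻¹` modulo `x^n - 1`. -/
private noncomputable def Tr (n : ℕ) : Polynomial (ZMod 2) →ₐ[ZMod 2] Polynomial (ZMod 2) :=
  aeval (X ^ (n - 1))

private lemma Tr_monomial (a : ZMod 2) (m : ℕ) :
    Tr n (C a * X ^ m) = C a * X ^ ((n - 1) * m) := by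
  rw [Tr, map_mul, map_pow, aeval_X, aeval_C, ← pow_mul, Polynomial.algebraMap_eq]

private lemma Tr_dvd_M (hn : 0 < n) : Mn n ∣ Tr n (Mn n) := by
  have h : Tr n (Mn n) = X ^ ((n - 1) * n) - X ^ 0 := by
    rw [Tr, map_sub, map_pow, aeval_X, map_one, ← pow_mul, pow_zero]
  rw [h]
  exact exp_dvd hn (by rw [Nat.mul_mod_left, Nat.zero_mod])

private lemma Tr_congr (hn : 0 < n) {p q : Polynomial (ZMod 2)} (h : Mn n ∣ p - q) :
    Mn n ∣ Tr n p - Tr n q := by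
  obtain ⟨t, ht⟩ := h
  have : Tr n p - Tr n q = Tr n (Mn n) * Tr n t := by
    rw [← map_mul, ← ht, map_sub]
  rw [this]
  exact (Tr_dvd_M hn).mul_right _

private lemma dvd_sum_sub (hn : 0 < n) (m : ℕ) (a : ℕ → ZMod 2) (e f : ℕ → ℕ)
    (h : ∀ i < m, e i % n = f i % n) :
    Mn n ∣ (∑ i ∈ range m, C (a i) * X ^ e i) - ∑ i ∈ range m, C (a i) * X ^ f i := by
  rw [← Finset.sum_sub_distrib]
  refine Finset.dvd_sum fun i hi => ?_
  have h1 : C (a i) * X ^ e i - C (a i) * X ^ f i = C (a i) * (X ^ e i - X ^ f i) := by ring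
  rw [h1]
  exact (exp_dvd hn (h i (mem_range.mp hi))).mul_left _

private lemma key_mod (hn : 0 < n) {i : ℕ} (hi : i < n) :
    ((n - 1) * (if i = 0 then 0 else n - i)) % n = i % n := by
  split_ifs with h
  · simp [h]
  · refine (Nat.modEq_iff_dvd.2 ?_).symm
    have h1 : 1 ≤ n := hn
    push_cast [Nat.cast_sub h1, Nat.cast_sub hi.le]
    exact ⟨(n : ℤ) - i - 1, by ring⟩

private lemma trtr_mod (hn : 0 < n) (i : ℕ) :
    ((n - 1) * ((n - 1) * i)) % n = i % n := by
  refine (Nat.modEq_iff_dvd.2 ?_).symm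
  have h1 : 1 ≤ n := hn
  push_cast [Nat.cast_sub h1]
  exact ⟨(i : ℤ) * ((n:ℤ) - 2), by ring⟩

private lemma rev_mod' (hn : 0 < n) {i : ℕ} (hi : i ≤ n) :
    ((n - 1) * i) % n = (n - i) % n := by
  have h : Nat.ModEq n ((n - 1) * i) (n - i) := by
    refine Nat.modEq_iff_dvd.2 ?_
    have h1 : 1 ≤ n := hn
    push_cast [Nat.cast_sub h1, Nat.cast_sub hi]
    exact ⟨1 - (i : ℤ), by ring⟩
  exact h

private lemma Tr_sum_form (hn : 0 < n) {f : Polynomial (ZMod 2)} {m : ℕ}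
    (hf : f.natDegree < m) :
    Tr n f = ∑ i ∈ range m, C (f.coeff i) * X ^ ((n - 1) * i) := by
  conv_lhs => rw [poly_as_sum hf]
  rw [map_sum]
  exact Finset.sum_congr rfl fun i _ => Tr_monomial _ _

private lemma tr_bar (hn : 0 < n) {f : Polynomial (ZMod 2)} (hf : f.natDegree < n) :
    Mn n ∣ barPoly n f - Tr n f := by
  have h2 : Tr n f = ∑ i ∈ range n,
      C (f.coeff (if i = 0 then 0 else n - i)) * X ^ ((n - 1) * (if i = 0 then 0 else n - i)) := by
    rw [Tr_sum_form hn hf]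
    refine Finset.sum_nbij' (fun i => if i = 0 then 0 else n - i)
      (fun i => if i = 0 then 0 else n - i) ?_ ?_ ?_ ?_ ?_
    · intro i hi; exact mem_range.mpr (sigma_lt hn (mem_range.mp hi))
    · intro i hi; exact mem_range.mpr (sigma_lt hn (mem_range.mp hi))
    · intro i hi; exact sigma_sigma hn (mem_range.mp hi)
    · intro i hi; exact sigma_sigma hn (mem_range.mp hi)
    · intro i hi
      rw [sigma_sigma hn (mem_range.mp hi)]
  rw [h2, barPoly]
  exact dvd_sum_sub hn n _ _ _ fun i hi => (key_mod hn hi).symm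

private lemma tr_tr (hn : 0 < n) {f : Polynomial (ZMod 2)} (hf : f.natDegree < n) :
    Mn n ∣ Tr n (Tr n f) - f := by
  have h2 : Tr n (Tr n f) = ∑ i ∈ range n, C (f.coeff i) * X ^ ((n - 1) * ((n - 1) * i)) := by
    rw [Tr_sum_form hn hf, map_sum]
    exact Finset.sum_congr rfl fun i _ => Tr_monomial _ _
  have h3 := dvd_sum_sub hn n (fun i => f.coeff i) (fun i => (n - 1) * ((n - 1) * i))
    (fun i => i) (fun i _ => trtr_mod hn i)
  rw [← h2, ← poly_as_sum hf] at h3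
  exact h3

private lemma tr_rev (hn : 0 < n) {p : Polynomial (ZMod 2)} (hp : p.natDegree ≤ n) :
    Mn n ∣ Tr n p - X ^ (n - p.natDegree) * p.reverse := by
  set d := p.natDegree with hd
  have h2 : Tr n p = ∑ i ∈ range (d + 1), C (p.coeff i) * X ^ ((n - 1) * i) :=
    Tr_sum_form hn (by omega)
  have h3 : X ^ (n - d) * p.reverse = ∑ i ∈ range (d + 1), C (p.coeff i) * X ^ (n - i) := by
    have hrev : p.reverse = ∑ i ∈ range (d + 1), C (p.coeff (d - i)) * X ^ i := by
      conv_lhs => rw [poly_as_sum (show p.reverse.natDegree < d + 1 by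
        have := p.reverse_natDegree_le; omega)]
      refine Finset.sum_congr rfl fun i hi => ?_
      congr 1
      have hi' : i < d + 1 := by first | exact mem_range.mp hi | exact hi
      rw [coeff_reverse, revAt_le (show i ≤ p.natDegree by omega)]
    rw [hrev, Finset.mul_sum]
    rw [← Finset.sum_range_reflect (fun i => C (p.coeff i) * X ^ (n - i)) (d + 1)]
    refine Finset.sum_congr rfl fun i hi => ?_
    have hi'' : i < d + 1 := by first | exact mem_range.mp hi | exact hi
    have hi' : i ≤ d := by omega
    rw [show d + 1 - 1 - i = d - i from by omega,
        show n - (d - i) = n - d + i from by omega, pow_add]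
    ring
  rw [h2, h3]
  exact dvd_sum_sub hn (d+1) _ _ _ fun i hi =>
    rev_mod' hn (show i ≤ n by omega)

private lemma cong_bar (hn : 0 < n) {q : Polynomial (ZMod 2)} (hq : q.natDegree < n) :
    Mn n ∣ Tr n (barPoly n q) - q := by
  have h1 := Tr_congr hn (tr_bar hn hq)
  have h2 := tr_tr hn hq
  have h3 := dvd_add h1 h2
  rwa [sub_add_sub_cancel] at h3

end QCAux2

section QCAux3

open Finset

variable {n : ℕ}

private lemma sinner_split (u w : (Fin n → ZMod 2) × (Fin n → ZMod 2)) :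
    sinner n u w = einner n u.1 w.2 - einner n u.2 w.1 := by
  unfold sinner einner
  rw [← Finset.sum_sub_distrib]

/-- Claim A : the euclidean inner product as a coefficient of a product with the bar
polynomial. -/
private lemma einner_eq (hn : 0 < n) (p : Polynomial (ZMod 2)) (w : Fin n → ZMod 2) :
    einner n (vecL n (p %ₘ Mn n)) w = ell n (p * barPoly n (fromVec n w)) := by
  set q : Polynomial (ZMod 2) := fromVec n w with hq
  have hred : ell n (p * barPoly n q) = ell n ((p %ₘ Mn n) * barPoly n q) := by
    apply ell_congr hn
    have h1 : p * barPoly n q - (p %ₘ Mn n) * barPoly n q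
        = (p - p %ₘ Mn n) * barPoly n q := by ring
    rw [h1]
    exact (dvd_mod_sub hn p).mul_right _
  rw [hred]
  set ρ := p %ₘ Mn n with hρ
  have hρdeg : ρ.natDegree < n := natDegree_mod_lt hn p
  -- expand the product
  have hprod : ρ * barPoly n q = ∑ j ∈ range n, ∑ i ∈ range n,
      C (ρ.coeff j * q.coeff (if i = 0 then 0 else n - i)) * X ^ (j + i) := by
    conv_lhs => rw [poly_as_sum hρdeg, barPoly]
    rw [Finset.sum_mul_sum]
    refine Finset.sum_congr rfl fun j _ => Finset.sum_congr rfl fun i _ => ?_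
    rw [map_mul]
    ring
  rw [hprod, map_sum (ell n)]
  have hinner : ∀ j ∈ range n, ell n (∑ i ∈ range n,
      C (ρ.coeff j * q.coeff (if i = 0 then 0 else n - i)) * X ^ (j + i))
      = ρ.coeff j * q.coeff j := by
    intro j hj
    have hjn : j < n := mem_range.mp hj
    rw [map_sum (ell n)]
    have h1 : ∀ i ∈ range n,
        ell n (C (ρ.coeff j * q.coeff (if i = 0 then 0 else n - i)) * X ^ (j + i))
        = (ρ.coeff j * q.coeff (if i = 0 then 0 else n - i))
            * (if (j + i) % n = 0 then 1 else 0) := fun i _ => ell_monomial hn _ _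
    rw [Finset.sum_congr rfl h1]
    rw [sum_delta hn hjn (fun i => ρ.coeff j * q.coeff (if i = 0 then 0 else n - i))]
    rw [sigma_sigma hn hjn]
  rw [Finset.sum_congr rfl hinner]
  -- LHS
  unfold einner
  rw [← Fin.sum_univ_eq_sum_range (fun j => ρ.coeff j * q.coeff j) n]
  refine Finset.sum_congr rfl fun i _ => ?_
  rw [vecL_apply']
  congr 1
  rw [hq, coeff_fromVec w i.isLt]

/-- Claim B : a polynomial all of whose shifted constant terms mod `X^n-1` vanish is
divisible by `X^n-1`. -/
private lemma dvd_of_shifts (hn : 0 < n) (f : Polynomial (ZMod 2))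
    (h : ∀ k < n, ell n (X ^ k * f) = 0) : Mn n ∣ f := by
  set r := f %ₘ Mn n with hr
  have hrd : r.natDegree < n := natDegree_mod_lt hn f
  have hr0 : r = 0 := by
    apply Polynomial.ext
    intro j
    rw [coeff_zero]
    rcases lt_or_ge j n with hj | hj
    · set k := if j = 0 then 0 else n - j with hk
      have hkn : k < n := sigma_lt hn hj
      have h1 := h k hkn
      have h2 : ell n (X ^ k * f) = ell n (X ^ k * r) := by
        apply ell_congr hn
        have : X ^ k * f - X ^ k * r = X ^ k * (f - r) := by ring
        rw [this]
        exact (dvd_mod_sub hn f).mul_left _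
      rw [h2] at h1
      have h3 : X ^ k * r = ∑ i ∈ range n, C (r.coeff i) * X ^ (k + i) := by
        conv_lhs => rw [poly_as_sum hrd]
        rw [Finset.mul_sum]
        refine Finset.sum_congr rfl fun i _ => ?_
        rw [pow_add]; ring
      rw [h3, map_sum (ell n)] at h1
      have h4 : ∀ i ∈ range n, ell n (C (r.coeff i) * X ^ (k + i))
          = r.coeff i * (if (k + i) % n = 0 then 1 else 0) := fun i _ => ell_monomial hn _ _
      rw [Finset.sum_congr rfl h4, sum_delta hn hkn (fun i => r.coeff i)] at h1
      rw [hk, sigma_sigma hn hj] at h1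
      exact h1
    · exact coeff_eq_zero_of_natDegree_lt (lt_of_lt_of_le hrd hj)
  rw [← modByMonic_eq_zero_iff_dvd (monic_Mn hn)]
  exact hr0

/-- membership criterion for the quasi-cyclic code. -/
private lemma mem_code (hn : 0 < n) {g₁ g₂ v : Polynomial (ZMod 2)}
    (hvcop : IsCoprime (v - 1) (Mn n)) {c d : Polynomial (ZMod 2)}
    (h1 : g₁ ∣ v * c - d) (h2 : g₂ ∣ v * d - c) :
    (vecL n (c %ₘ Mn n), vecL n (d %ₘ Mn n)) ∈ QCCode n g₁ g₂ v := by
  obtain ⟨e, he⟩ := h1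
  obtain ⟨f, hf⟩ := h2
  obtain ⟨s, t, hst⟩ := hvcop
  have htwo : (2 : Polynomial (ZMod 2)) = 0 := by
    rw [← map_ofNat (C : ZMod 2 →+* Polynomial (ZMod 2)) 2,
      show (2 : ZMod 2) = 0 from rfl, map_zero]
  have hv2 : v ^ 2 - 1 = (v - 1) ^ 2 := by linear_combination (v - 1) * htwo
  have key : (s * (v - 1)) ^ 2 - 1 = Mn n * (t * t * Mn n - 2 * t) := by
    have hs : s * (v - 1) = 1 - t * Mn n := by linear_combination hst
    rw [hs]; ring
  refine ⟨(s * s * e, s * s * f), ?_⟩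
  rw [cwL_apply]
  have hA : Mn n ∣ (s * s * e) * (v * g₁) + (s * s * f) * g₂ - c := by
    have hAeq : (s * s * e) * (v * g₁) + (s * s * f) * g₂ - c
        = ((s * (v - 1)) ^ 2 - 1) * c := by
      linear_combination (s * s * v) * he + (s * s) * hf + (s * s * c) * hv2 + (s^2*e*v*g₁ - s^2*v^2*c + s^2*f*g₂ + s^2*c) * htwo
    rw [hAeq, key]
    exact (dvd_mul_right (Mn n) _).mul_right _
  have hB : Mn n ∣ (s * s * e) * g₁ + (s * s * f) * (v * g₂) - d := by
    have hBeq : (s * s * e) * g₁ + (s * s * f) * (v * g₂) - d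
        = ((s * (v - 1)) ^ 2 - 1) * d := by
      linear_combination (s * s) * he + (s * s * v) * hf + (s * s * d) * hv2 + (s^2*e*g₁ + s^2*f*v*g₂ - s^2*v^2*d + s^2*d) * htwo
    rw [hBeq, key]
    exact (dvd_mul_right (Mn n) _).mul_right _
  rw [Prod.mk.injEq]
  exact ⟨by rw [mod_congr hn hA], by rw [mod_congr hn hB]⟩

/-- kernel characterisation of the codeword map. -/
private lemma cwL_eq_zero_iff (hn : 0 < n) {g₁ g₂ v h₁ h₂ : Polynomial (ZMod 2)}
    (he₁ : g₁ * h₁ = Mn n) (he₂ : g₂ * h₂ = Mn n)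
    (hvcop : IsCoprime (v - 1) (Mn n)) (a b : Polynomial (ZMod 2)) :
    cwL n g₁ g₂ v (a, b) = 0 ↔ h₁ ∣ a ∧ h₂ ∣ b := by
  have hg₁0 : g₁ ≠ 0 := left_ne_zero_of_mul (he₁ ▸ Mn_ne_zero hn)
  have hg₂0 : g₂ ≠ 0 := left_ne_zero_of_mul (he₂ ▸ Mn_ne_zero hn)
  have htwo : (2 : Polynomial (ZMod 2)) = 0 := by
    rw [← map_ofNat (C : ZMod 2 →+* Polynomial (ZMod 2)) 2,
      show (2 : ZMod 2) = 0 from rfl, map_zero]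
  have hv2 : v ^ 2 - 1 = (v - 1) ^ 2 := by linear_combination (v - 1) * htwo
  rw [cwL_apply, Prod.ext_iff, Prod.fst_zero, Prod.snd_zero, vecL_mod_eq_zero hn, vecL_mod_eq_zero hn]
  constructor
  · rintro ⟨hA, hB⟩
    have hag : Mn n ∣ (a * g₁) * (v - 1) ^ 2 := by
      have heq : (a * g₁) * (v - 1) ^ 2
          = v * (a * (v * g₁) + b * g₂) - (a * g₁ + b * (v * g₂)) + (a * g₁) * ((v-1)^2 - (v^2 - 1)) := by
        ring
      rw [heq]
      refine dvd_add (dvd_sub (hA.mul_left v) hB) ?_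
      rw [← hv2, sub_self, mul_zero]
      exact dvd_zero _
    have hbg : Mn n ∣ (b * g₂) * (v - 1) ^ 2 := by
      have heq : (b * g₂) * (v - 1) ^ 2
          = v * (a * g₁ + b * (v * g₂)) - (a * (v * g₁) + b * g₂) + (b * g₂) * ((v-1)^2 - (v^2 - 1)) := by
        ring
      rw [heq]
      refine dvd_add (dvd_sub (hB.mul_left v) hA) ?_
      rw [← hv2, sub_self, mul_zero]
      exact dvd_zero _
    have hcop2 : IsCoprime (Mn n) ((v - 1) ^ 2) := (hvcop.pow_left).symm
    have ha' : Mn n ∣ a * g₁ := hcop2.dvd_of_dvd_mul_right hag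
    have hb' : Mn n ∣ b * g₂ := hcop2.dvd_of_dvd_mul_right hbg
    constructor
    · rw [← he₁, mul_comm a g₁] at ha'
      exact (mul_dvd_mul_iff_left hg₁0).1 ha'
    · rw [← he₂, mul_comm b g₂] at hb'
      exact (mul_dvd_mul_iff_left hg₂0).1 hb'
  · rintro ⟨⟨a', ha⟩, ⟨b', hb⟩⟩
    constructor
    · exact ⟨v * a' + b', by rw [ha, hb]; linear_combination (v * a') * he₁ + b' * he₂⟩
    · exact ⟨a' + v * b', by rw [ha, hb]; linear_combination a' * he₁ + (v * b') * he₂⟩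

private lemma flip_cong (hn : 0 < n) {A B : Polynomial (ZMod 2)} {e : ℕ}
    (h : Mn n ∣ A - X ^ e * B) : Mn n ∣ B - X ^ (n - e % n) * A := by
  have hmod : ((n - e % n) + e) % n = 0 % n := by
    have h3 := Nat.div_add_mod e n
    have h4 : e % n < n := Nat.mod_lt _ hn
    rw [show (n - e % n) + e = n * (1 + e / n) by
      rw [Nat.mul_add, Nat.mul_one]
      generalize n * (e / n) = tt at h3 ⊢
      omega]
    rw [Nat.mul_mod_right, Nat.zero_mod]
  have hx : Mn n ∣ X ^ ((n - e % n) + e) - X ^ 0 := exp_dvd hn hmod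
  have h5 : B - X ^ (n - e % n) * A
      = -(X ^ (n - e % n) * (A - X ^ e * B)) - (X ^ ((n - e % n) + e) - X ^ 0) * B := by
    rw [pow_add, pow_zero]; ring
  rw [h5]
  exact dvd_sub (dvd_neg.2 (h.mul_left _)) (hx.mul_right _)

private lemma rev_Mn (hn : 0 < n) : (Mn n).reverse = Mn n := by
  have hneg : (-1 : Polynomial (ZMod 2)) = 1 := by
    rw [← C_1, ← C_neg, show (-1 : ZMod 2) = 1 from rfl]
  have h2 : Mn n = X ^ n + 1 := by
    rw [show (Mn n : Polynomial (ZMod 2)) = X ^ n - 1 from rfl, sub_eq_add_neg, hneg]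
  rw [Polynomial.reverse, natDegree_Mn, h2, reflect_add, ← pow_zero (X : Polynomial (ZMod 2)),
    reflect_monomial, reflect_monomial, revAt_le (le_refl n), revAt_le (Nat.zero_le n),
    Nat.sub_self, Nat.sub_zero, add_comm]

end QCAux3

/-- under the symplectic dual-containing conditions, `C(g₁,g₂,v)` contains its
symplectic dual, has `F₂`-dimension `2n − deg g₁ − deg g₂`, and this dimension is `≥ n`. -/
theorem stmt_8 (n : ℕ) (hn : 0 < n) (g₁ g₂ v h₁ h₂ : Polynomial (ZMod 2))
    (hdeg₁ : g₁.natDegree < n) (hdeg₂ : g₂.natDegree < n) (hdegv : v.natDegree < n)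
    (he₁ : g₁ * h₁ = X ^ n - 1) (he₂ : g₂ * h₂ = X ^ n - 1)
    (hcop : IsCoprime g₁ g₂) (hvcop : IsCoprime (v - 1) (X ^ n - 1))
    (hdvd : g₂ ∣ h₁.reverse) (hbar : barPoly n v = v) :
    sympDual n (QCCode n g₁ g₂ v) ≤ QCCode n g₁ g₂ v ∧
    Module.finrank (ZMod 2) ↥(QCCode n g₁ g₂ v) =
      2 * n - g₁.natDegree - g₂.natDegree ∧
    n ≤ Module.finrank (ZMod 2) ↥(QCCode n g₁ g₂ v) := by
  classical
  have he₁' : g₁ * h₁ = Mn n := he₁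
  have he₂' : g₂ * h₂ = Mn n := he₂
  have hvcop' : IsCoprime (v - 1) (Mn n) := hvcop
  have hg₁0 : g₁ ≠ 0 := left_ne_zero_of_mul (he₁' ▸ Mn_ne_zero hn)
  have hh₁0 : h₁ ≠ 0 := right_ne_zero_of_mul (he₁' ▸ Mn_ne_zero hn)
  have hg₂0 : g₂ ≠ 0 := left_ne_zero_of_mul (he₂' ▸ Mn_ne_zero hn)
  have hh₂0 : h₂ ≠ 0 := right_ne_zero_of_mul (he₂' ▸ Mn_ne_zero hn)
  have hsum₁ : g₁.natDegree + h₁.natDegree = n := by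
    have h := congrArg natDegree he₁'
    rwa [natDegree_mul hg₁0 hh₁0, natDegree_Mn] at h
  have hsum₂ : g₂.natDegree + h₂.natDegree = n := by
    have h := congrArg natDegree he₂'
    rwa [natDegree_mul hg₂0 hh₂0, natDegree_Mn] at h
  have hZ : ∀ x y : ZMod 2, x * y = 1 → y = 1 := by decide
  have hm₁ : h₁.Monic := by
    have h := congrArg leadingCoeff he₁'
    rw [leadingCoeff_mul] at h
    exact hZ _ _ (h.trans (monic_Mn hn))
  have hm₂ : h₂.Monic := by
    have h := congrArg leadingCoeff he₂'
    rw [leadingCoeff_mul] at h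
    exact hZ _ _ (h.trans (monic_Mn hn))
  have hk₁pos : 0 < h₁.natDegree := by omega
  have hk₂pos : 0 < h₂.natDegree := by omega
  obtain ⟨k', hk'⟩ := hdvd
  have hd21 : g₂.natDegree ≤ h₁.natDegree := by
    have h0 : h₁.reverse ≠ 0 := fun h => hh₁0 (reverse_eq_zero.1 h)
    exact le_trans (natDegree_le_of_dvd ⟨k', hk'⟩ h0) h₁.reverse_natDegree_le
  -- ===================== dual containment =====================
  have hdual : sympDual n (QCCode n g₁ g₂ v) ≤ QCCode n g₁ g₂ v := by
    intro w hw
    have hw' : ∀ u ∈ QCCode n g₁ g₂ v, sinner n u w = 0 := hw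
    set c : Polynomial (ZMod 2) := fromVec n w.1 with hc
    set d : Polynomial (ZMod 2) := fromVec n w.2 with hd
    have hcdeg : c.natDegree < n := natDegree_fromVec_lt hn _
    have hddeg : d.natDegree < n := natDegree_fromVec_lt hn _
    have hF1 : Mn n ∣ g₁ * (v * barPoly n d - barPoly n c) := by
      apply dvd_of_shifts hn
      intro k hk
      have hu : cwL n g₁ g₂ v (X ^ k, 0) ∈ QCCode n g₁ g₂ v := ⟨_, rfl⟩
      have h0 := hw' _ hu
      have hu2 : cwL n g₁ g₂ v (X ^ k, 0)
          = (vecL n ((X ^ k * (v * g₁)) %ₘ Mn n), vecL n ((X ^ k * g₁) %ₘ Mn n)) := by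
        rw [cwL_apply]
        simp only [zero_mul, add_zero]
      rw [hu2, sinner_split] at h0
      simp only at h0
      rw [einner_eq hn (X ^ k * (v * g₁)) w.2, einner_eq hn (X ^ k * g₁) w.1] at h0
      rw [← map_sub] at h0
      have heq : X ^ k * (v * g₁) * barPoly n (fromVec n w.2)
          - X ^ k * g₁ * barPoly n (fromVec n w.1)
          = X ^ k * (g₁ * (v * barPoly n d - barPoly n c)) := by
        rw [← hc, ← hd]; ring
      rwa [heq] at h0
    have hF2 : Mn n ∣ g₂ * (barPoly n d - v * barPoly n c) := by
      apply dvd_of_shifts hn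
      intro k hk
      have hu : cwL n g₁ g₂ v (0, X ^ k) ∈ QCCode n g₁ g₂ v := ⟨_, rfl⟩
      have h0 := hw' _ hu
      have hu2 : cwL n g₁ g₂ v (0, X ^ k)
          = (vecL n ((X ^ k * g₂) %ₘ Mn n), vecL n ((X ^ k * (v * g₂)) %ₘ Mn n)) := by
        rw [cwL_apply]
        simp only [zero_mul, zero_add]
      rw [hu2, sinner_split] at h0
      simp only at h0
      rw [einner_eq hn (X ^ k * g₂) w.2, einner_eq hn (X ^ k * (v * g₂)) w.1] at h0
      rw [← map_sub] at h0
      have heq : X ^ k * g₂ * barPoly n (fromVec n w.2)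
          - X ^ k * (v * g₂) * barPoly n (fromVec n w.1)
          = X ^ k * (g₂ * (barPoly n d - v * barPoly n c)) := by
        rw [← hc, ← hd]; ring
      rwa [heq] at h0
    have hh₁dvd : h₁ ∣ v * barPoly n d - barPoly n c := by
      rw [← he₁'] at hF1
      exact (mul_dvd_mul_iff_left hg₁0).1 hF1
    obtain ⟨k1, hk1⟩ := hh₁dvd
    have hh₂dvd : h₂ ∣ barPoly n d - v * barPoly n c := by
      rw [← he₂'] at hF2
      exact (mul_dvd_mul_iff_left hg₂0).1 hF2
    obtain ⟨k2, hk2⟩ := hh₂dvd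
    have hv' : Mn n ∣ v - Tr n v := by
      have h := tr_bar hn hdegv
      rwa [hbar] at h
    have hdc : Mn n ∣ Tr n (barPoly n d) - d := cong_bar hn hddeg
    have hcc : Mn n ∣ Tr n (barPoly n c) - c := cong_bar hn hcdeg
    have hstep2 : g₂ ∣ v * d - c := by
      have c1 : Mn n ∣ (v * d - c) - Tr n (v * barPoly n d - barPoly n c) := by
        rw [map_sub, map_mul]
        have hre : (v * d - c) - (Tr n v * Tr n (barPoly n d) - Tr n (barPoly n c))
            = v * (d - Tr n (barPoly n d)) + Tr n (barPoly n d) * (v - Tr n v)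
              + (Tr n (barPoly n c) - c) := by ring
        rw [hre]
        exact dvd_add (dvd_add ((dvd_sub_comm.1 hdc).mul_left v) (hv'.mul_left _)) hcc
      have c2 : Mn n ∣ (v * d - c) - Tr n h₁ * Tr n k1 := by
        rw [hk1, map_mul] at c1; exact c1
      have c3 := tr_rev hn (show h₁.natDegree ≤ n by omega)
      rw [hk'] at c3
      have c4 : Mn n ∣ (v * d - c) - g₂ * (X ^ (n - h₁.natDegree) * k' * Tr n k1) := by
        have hre : (v * d - c) - g₂ * (X ^ (n - h₁.natDegree) * k' * Tr n k1)
            = ((v * d - c) - Tr n h₁ * Tr n k1)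
              + (Tr n h₁ - X ^ (n - h₁.natDegree) * (g₂ * k')) * Tr n k1 := by ring
        rw [hre]
        exact dvd_add c2 (c3.mul_right _)
      obtain ⟨q, hq⟩ := c4
      exact ⟨X ^ (n - h₁.natDegree) * k' * Tr n k1 + h₂ * q,
        by linear_combination hq - q * he₂'⟩
    have hrevmul : (g₁ * h₁).reverse = g₁.reverse * h₁.reverse := by
      apply reverse_mul
      rw [← leadingCoeff_mul, he₁', monic_Mn hn]
      exact one_ne_zero
    have hh₂eq : h₂ = g₁.reverse * k' := by
      apply mul_left_cancel₀ hg₂0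
      calc g₂ * h₂ = Mn n := he₂'
        _ = (Mn n).reverse := (rev_Mn hn).symm
        _ = (g₁ * h₁).reverse := by rw [he₁']
        _ = g₁.reverse * h₁.reverse := hrevmul
        _ = g₁.reverse * (g₂ * k') := by rw [hk']
        _ = g₂ * (g₁.reverse * k') := by ring
    have hstep1 : g₁ ∣ v * c - d := by
      have c1 : Mn n ∣ (d - v * c) - Tr n (barPoly n d - v * barPoly n c) := by
        rw [map_sub, map_mul]
        have hre : (d - v * c) - (Tr n (barPoly n d) - Tr n v * Tr n (barPoly n c))
            = (Tr n (barPoly n c)) * (Tr n v - v) + v * (Tr n (barPoly n c) - c)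
              - (Tr n (barPoly n d) - d) := by ring
        rw [hre]
        exact dvd_sub (dvd_add ((dvd_sub_comm.1 hv').mul_left _) (hcc.mul_left v)) hdc
      have c2 : Mn n ∣ (d - v * c) - Tr n g₁.reverse * (Tr n k' * Tr n k2) := by
        rw [hk2, hh₂eq, map_mul, map_mul] at c1
        have hre : Tr n g₁.reverse * Tr n k' * Tr n k2
            = Tr n g₁.reverse * (Tr n k' * Tr n k2) := by ring
        rwa [hre] at c1
      have c5 : Mn n ∣ Tr n g₁ - X ^ (n - g₁.natDegree) * g₁.reverse :=
        tr_rev hn (le_of_lt hdeg₁)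
      have c6 : Mn n ∣ g₁.reverse - X ^ (n - (n - g₁.natDegree) % n) * Tr n g₁ :=
        flip_cong hn c5
      have c7 : Mn n ∣ Tr n g₁.reverse
          - X ^ ((n - 1) * (n - (n - g₁.natDegree) % n)) * Tr n (Tr n g₁) := by
        have h := Tr_congr hn c6
        have h8 : Tr n (X ^ (n - (n - g₁.natDegree) % n) * Tr n g₁)
            = X ^ ((n - 1) * (n - (n - g₁.natDegree) % n)) * Tr n (Tr n g₁) := by
          rw [map_mul, map_pow, show Tr n X = X ^ (n - 1) from by rw [Tr, aeval_X], ← pow_mul]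
        rwa [h8] at h
      have c8 : Mn n ∣ Tr n (Tr n g₁) - g₁ := tr_tr hn hdeg₁
      have c9 : Mn n ∣ Tr n g₁.reverse
          - X ^ ((n - 1) * (n - (n - g₁.natDegree) % n)) * g₁ := by
        have hre : Tr n g₁.reverse - X ^ ((n - 1) * (n - (n - g₁.natDegree) % n)) * g₁
            = (Tr n g₁.reverse
                - X ^ ((n - 1) * (n - (n - g₁.natDegree) % n)) * Tr n (Tr n g₁))
              + X ^ ((n - 1) * (n - (n - g₁.natDegree) % n)) * (Tr n (Tr n g₁) - g₁) := by
          ring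
        rw [hre]; exact dvd_add c7 (c8.mul_left _)
      have c10 : Mn n ∣ (d - v * c)
          - g₁ * (X ^ ((n - 1) * (n - (n - g₁.natDegree) % n)) * (Tr n k' * Tr n k2)) := by
        have hre : (d - v * c)
            - g₁ * (X ^ ((n - 1) * (n - (n - g₁.natDegree) % n)) * (Tr n k' * Tr n k2))
            = ((d - v * c) - Tr n g₁.reverse * (Tr n k' * Tr n k2))
              + (Tr n g₁.reverse - X ^ ((n - 1) * (n - (n - g₁.natDegree) % n)) * g₁)
                * (Tr n k' * Tr n k2) := by ring
        rw [hre]; exact dvd_add c2 (c9.mul_right _)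
      obtain ⟨q, hq⟩ := c10
      have hgd : g₁ ∣ d - v * c :=
        ⟨X ^ ((n - 1) * (n - (n - g₁.natDegree) % n)) * (Tr n k' * Tr n k2) + h₁ * q,
          by linear_combination hq - q * he₁'⟩
      exact dvd_sub_comm.1 hgd
    have hmem := mem_code hn hvcop' hstep1 hstep2
    rw [mod_eq_self hn hcdeg, mod_eq_self hn hddeg, hc, hd,
      vecL_fromVec, vecL_fromVec] at hmem
    simpa using hmem
  -- ===================== dimension =====================
  let Φ : ((Fin h₁.natDegree → ZMod 2) × (Fin h₂.natDegree → ZMod 2)) →ₗ[ZMod 2]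
      ((Fin n → ZMod 2) × (Fin n → ZMod 2)) :=
    (cwL n g₁ g₂ v).comp (LinearMap.prodMap (fromVec h₁.natDegree) (fromVec h₂.natDegree))
  have hΦ : ∀ x y, Φ (x, y) = cwL n g₁ g₂ v (fromVec _ x, fromVec _ y) := fun x y => rfl
  have hne₁ : h₁ ≠ 1 := fun h => by rw [h] at hk₁pos; simp at hk₁pos
  have hne₂ : h₂ ≠ 1 := fun h => by rw [h] at hk₂pos; simp at hk₂pos
  have hrange : LinearMap.range Φ = QCCode n g₁ g₂ v := by
    apply le_antisymm
    · rintro z ⟨x, rfl⟩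
      exact ⟨_, rfl⟩
    · rintro z ⟨⟨a, b⟩, rfl⟩
      have hda : (a %ₘ h₁).natDegree < h₁.natDegree := natDegree_modByMonic_lt a hm₁ hne₁
      have hdb : (b %ₘ h₂).natDegree < h₂.natDegree := natDegree_modByMonic_lt b hm₂ hne₂
      refine ⟨(vecL h₁.natDegree (a %ₘ h₁), vecL h₂.natDegree (b %ₘ h₂)), ?_⟩
      rw [hΦ, fromVec_vecL hda, fromVec_vecL hdb]
      obtain ⟨qa, hqa⟩ : h₁ ∣ a - a %ₘ h₁ :=
        ⟨a /ₘ h₁, by linear_combination - modByMonic_add_div a h₁⟩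
      obtain ⟨qb, hqb⟩ : h₂ ∣ b - b %ₘ h₂ :=
        ⟨b /ₘ h₂, by linear_combination - modByMonic_add_div b h₂⟩
      rw [cwL_apply, cwL_apply]
      have hA : Mn n ∣ ((a %ₘ h₁) * (v * g₁) + (b %ₘ h₂) * g₂) - (a * (v * g₁) + b * g₂) := by
        refine ⟨-(v * qa) - qb, ?_⟩
        linear_combination (-(v * g₁)) * hqa - g₂ * hqb - (v * qa) * he₁' - qb * he₂'
      have hB : Mn n ∣ ((a %ₘ h₁) * g₁ + (b %ₘ h₂) * (v * g₂)) - (a * g₁ + b * (v * g₂)) := by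
        refine ⟨-qa - v * qb, ?_⟩
        linear_combination (-g₁) * hqa - (v * g₂) * hqb - qa * he₁' - (v * qb) * he₂'
      rw [Prod.mk.injEq]
      exact ⟨by rw [mod_congr hn hA], by rw [mod_congr hn hB]⟩
  have hinj : Function.Injective Φ := by
    rw [← LinearMap.ker_eq_bot, LinearMap.ker_eq_bot']
    rintro ⟨x, y⟩ hxy
    rw [hΦ] at hxy
    obtain ⟨hxa, hyb⟩ := (cwL_eq_zero_iff hn he₁' he₂' hvcop' _ _).1 hxy
    have hx0 : fromVec h₁.natDegree x = 0 := by
      by_contra h0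
      have h1 := natDegree_le_of_dvd hxa h0
      have h2 := natDegree_fromVec_lt hk₁pos x
      omega
    have hy0 : fromVec h₂.natDegree y = 0 := by
      by_contra h0
      have h1 := natDegree_le_of_dvd hyb h0
      have h2 := natDegree_fromVec_lt hk₂pos y
      omega
    have hx : x = 0 := by rw [← vecL_fromVec x, hx0, map_zero]
    have hy : y = 0 := by rw [← vecL_fromVec y, hy0, map_zero]
    rw [hx, hy]; rfl
  have hfr : Module.finrank (ZMod 2) (QCCode n g₁ g₂ v) = h₁.natDegree + h₂.natDegree := by
    rw [← hrange, LinearMap.finrank_range_of_inj hinj, Module.finrank_prod,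
      Module.finrank_fin_fun, Module.finrank_fin_fun]
  refine ⟨hdual, ?_, ?_⟩
  · rw [hfr]; omega
  · rw [hfr]; omega
end

section
/- Let n be an odd positive integer, let ζ be a primitive n-th root of unity in an algebraic closure of F₂, let g₁, g₂ ∈ F₂[x] be monic divisors of xⁿ−1 with g₁·h₁ = xⁿ−1 for some h₁ ∈ F₂[x], and set g₁^⊥ = x^{deg h₁}·h₁(1/x). Define the defining sets T₁ = {i ∈ Z/nZ : g₁(ζⁱ) = 0} and T₂ = {i ∈ Z/nZ : g₂(ζⁱ) = 0}. If T₁ ∩ (−T₂) = ∅ and T₁ ∩ T₂ = ∅, then g₂ divides g₁^⊥ in F₂[x] and gcd(g₁, g₂) = 1. -/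
open Polynomial

private lemma coprime_of_no_common_root (a b : Polynomial (ZMod 2)) (ha : a ≠ 0)
    (h : ∀ α : AlgebraicClosure (ZMod 2), aeval α a = 0 → aeval α b ≠ 0) :
    IsCoprime a b := by
  rw [← EuclideanDomain.gcd_isUnit_iff]
  by_contra hu
  set d := EuclideanDomain.gcd a b with hd
  have hda : d ∣ a := EuclideanDomain.gcd_dvd_left a b
  have hdb : d ∣ b := EuclideanDomain.gcd_dvd_right a b
  have hdne : d ≠ 0 := fun h0 => ha (EuclideanDomain.gcd_eq_zero_iff.mp (hd ▸ h0)).1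
  have hdeg : d.degree ≠ 0 := fun h0 => hu (Polynomial.isUnit_iff_degree_eq_zero.mpr h0)
  obtain ⟨α, hα⟩ := IsAlgClosed.exists_aeval_eq_zero (AlgebraicClosure (ZMod 2)) d hdeg
  obtain ⟨c, hc⟩ := hda
  obtain ⟨c', hc'⟩ := hdb
  exact h α (by simp [hc, hα]) (by simp [hc', hα])

/-- if the defining sets satisfy `T₁ ∩ (−T₂) = ∅` and `T₁ ∩ T₂ = ∅`,
then `g₂ ∣ g₁^⊥` (with `g₁^⊥ = h₁.reverse`) and `gcd(g₁, g₂) = 1`. -/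
theorem stmt_9 (n : ℕ) (hn : 0 < n) (hodd : Odd n)
    (ζ : AlgebraicClosure (ZMod 2)) (hζ : IsPrimitiveRoot ζ n)
    (g₁ g₂ h₁ : Polynomial (ZMod 2)) (hm₁ : g₁.Monic) (hm₂ : g₂.Monic)
    (hdvd₂ : g₂ ∣ X ^ n - 1) (he₁ : g₁ * h₁ = X ^ n - 1)
    (hT₁ : {i : ZMod n | Polynomial.aeval (ζ ^ i.val) g₁ = 0} ∩
        ((fun i => -i) '' {i : ZMod n | Polynomial.aeval (ζ ^ i.val) g₂ = 0}) = ∅)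
    (hT₂ : {i : ZMod n | Polynomial.aeval (ζ ^ i.val) g₁ = 0} ∩
        {i : ZMod n | Polynomial.aeval (ζ ^ i.val) g₂ = 0} = ∅) :
    g₂ ∣ h₁.reverse ∧ IsCoprime g₁ g₂ := by
  haveI : NeZero n := ⟨hn.ne'⟩
  have hdvd₁ : g₁ ∣ X ^ n - 1 := ⟨h₁, he₁.symm⟩
  have hpow : ∀ α : AlgebraicClosure (ZMod 2), ∀ p : Polynomial (ZMod 2),
      p ∣ X ^ n - 1 → aeval α p = 0 → α ^ n = 1 := by
    rintro α p ⟨c, hc⟩ hα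
    have h0 : aeval α (X ^ n - 1 : Polynomial (ZMod 2)) = 0 := by rw [hc]; simp [hα]
    simpa [sub_eq_zero] using h0
  have hrep : ∀ α : AlgebraicClosure (ZMod 2), α ^ n = 1 → ∃ i : ZMod n, α = ζ ^ i.val := by
    intro α hα
    obtain ⟨k, hk, hke⟩ := hζ.eq_pow_of_pow_eq_one hα
    exact ⟨(k : ZMod n), by rw [ZMod.val_natCast_of_lt hk, hke]⟩
  have hinv : ∀ i : ZMod n, ζ ^ i.val * ζ ^ (-i).val = 1 := by
    intro i
    rw [← pow_add, hζ.pow_eq_one_iff_dvd]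
    have h0 : (i + -i).val = 0 := by simp
    rw [ZMod.val_add] at h0
    exact Nat.dvd_of_mod_eq_zero h0
  have hcop : IsCoprime g₁ g₂ := by
    apply coprime_of_no_common_root _ _ hm₁.ne_zero
    intro α h1 h2
    obtain ⟨i, rfl⟩ := hrep α (hpow α g₁ hdvd₁ h1)
    exact Set.eq_empty_iff_forall_notMem.mp hT₂ i ⟨h1, h2⟩
  have hcop' : IsCoprime g₂ g₁.reverse := by
    apply coprime_of_no_common_root _ _ hm₂.ne_zero
    intro α h2 h1
    obtain ⟨i, rfl⟩ := hrep α (hpow α g₂ hdvd₂ h2)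
    letI : Invertible (ζ ^ (-i).val) :=
      ⟨ζ ^ i.val, hinv i, by rw [mul_comm]; exact hinv i⟩
    have hrev : eval₂ (algebraMap (ZMod 2) (AlgebraicClosure (ZMod 2))) (⅟ (ζ ^ (-i).val))
        g₁.reverse = 0 := by
      show eval₂ _ (ζ ^ i.val) g₁.reverse = 0
      rw [← aeval_def]; exact h1
    have hg1 : aeval (ζ ^ (-i).val) g₁ = 0 := by
      rw [aeval_def]
      exact (eval₂_reverse_eq_zero_iff _ _ _).mp hrev
    exact Set.eq_empty_iff_forall_notMem.mp hT₁ (-i) ⟨hg1, ⟨i, h2, rfl⟩⟩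
  refine ⟨?_, hcop⟩
  have hXn : (X ^ n - 1 : Polynomial (ZMod 2)).reverse = X ^ n - 1 := by
    have h2 : (X ^ n - 1 : Polynomial (ZMod 2)) = X ^ n + C 1 := by
      rw [map_one, sub_eq_add_neg, CharTwo.neg_eq]
    rw [h2, reverse_add_C, natDegree_X_pow]
    simp [reverse, add_comm]
  have hdvd : g₂ ∣ g₁.reverse * h₁.reverse := by
    rw [← reverse_mul_of_domain, he₁, hXn]; exact hdvd₂
  exact hcop'.dvd_of_dvd_mul_left hdvd
end
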